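/- (Ukkonen NFA edit-distance characterization) Let α be a type with decidable equality, ψ : List α a pattern of length m, and φ : List α an input sequence, with the reachability relation Reach defined inductively by: Reach 0 0 []; (horizontal/match) if Reach i j u and the (j+1)-st symbol of ψ is c, then Reach i (j+1) (u ++ [c]); (vertical/insertion) if Reach i j u then Reach (i+1) j (u ++ [c]) for any symbol c; (solid diagonal/substitution) if Reach i j u and j < m then Reach (i+1) (j+1) (u ++ [c]) for any symbol c; (dashed diagonal/deletion) if Reach i j u and j < m then Reach (i+1) (j+1) u. Then the Levenshtein distance (with unit costs) between φ and ψ is the least natural number i such that Reach i m φ holds; i.e., the input φ reaches the accept state in row i of the Ukkonen automaton for no i below the edit distance, and it does reach the accept state in the row equal to the edit distance. -/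

import Mathlib

/-- `UkkonenReach ψ i j u` : state `q_{i,j}` of the Ukkonen NFA of the pattern `ψ`
is reachable after consuming the input list `u`. -/
inductive UkkonenReach {α : Type*} (ψ : List α) : ℕ → ℕ → List α → Prop
  | base : UkkonenReach ψ 0 0 []
  | horiz {i j : ℕ} {u : List α} {c : α} :
      UkkonenReach ψ i j u → ψ[j]? = some c → UkkonenReach ψ i (j + 1) (u ++ [c])
  | insert {i j : ℕ} {u : List α} (c : α) :
      UkkonenReach ψ i j u → UkkonenReach ψ (i + 1) j (u ++ [c])
  | subst {i j : ℕ} {u : List α} (c : α) :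
      UkkonenReach ψ i j u → j < ψ.length → UkkonenReach ψ (i + 1) (j + 1) (u ++ [c])
  | del {i j : ℕ} {u : List α} :
      UkkonenReach ψ i j u → j < ψ.length → UkkonenReach ψ (i + 1) (j + 1) u

/-- Costs of the Levenshtein edit operations (Mathlib's former `Levenshtein.Cost`,
removed from Mathlib; restored here verbatim with its old meaning). -/
structure Levenshtein.Cost (α β δ : Type*) where
  delete : α → δ
  insert : β → δ
  substitute : α → β → δ

/-- Unit costs (Mathlib's former `Levenshtein.defaultCost`). -/
def Levenshtein.defaultCost {α : Type*} [DecidableEq α] : Levenshtein.Cost α α ℕ where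
  delete _ := 1
  insert _ := 1
  substitute a b := if a = b then 0 else 1

/-- Mathlib's former `Levenshtein.impl`. -/
def Levenshtein.impl {α β δ : Type*} [AddZeroClass δ] [Min δ] {C : Levenshtein.Cost α β δ}
    (xs : List α) (y : β) (d : {r : List δ // 0 < r.length}) :
    {r : List δ // 0 < r.length} :=
  let ⟨ds, w⟩ := d
  xs.zip (ds.zip ds.tail) |>.foldr
    (init := ⟨[C.insert y + ds.getLast (List.length_pos_iff.mp w)], by simp⟩)
    (fun ⟨x, d₀, d₁⟩ ⟨r, w⟩ =>
      ⟨min (C.delete x + r[0]) (min (C.insert y + d₀) (C.substitute x y + d₁)) :: r, by simp⟩)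

/-- Mathlib's former `Levenshtein.suffixLevenshtein`. -/
def Levenshtein.suffixLevenshtein {α β δ : Type*} [AddZeroClass δ] [Min δ]
    (C : Levenshtein.Cost α β δ) (xs : List α) (ys : List β) :
    {r : List δ // 0 < r.length} :=
  ys.foldr
    (Levenshtein.impl (C := C) xs)
    (xs.foldr (init := ⟨[0], by simp⟩) (fun a ⟨r, w⟩ => ⟨(C.delete a + r[0]) :: r, by simp⟩))

/-- Mathlib's former `levenshtein`: the edit distance with cost function `C`. -/
def levenshtein {α β δ : Type*} [AddZeroClass δ] [Min δ]
    (C : Levenshtein.Cost α β δ) (xs : List α) (ys : List β) : δ :=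
  let ⟨r, w⟩ := Levenshtein.suffixLevenshtein C xs ys
  r[0]


namespace UkkonenLevAux
variable {α β δ : Type*} [AddZeroClass δ] [Min δ] (C : Levenshtein.Cost α β δ)

theorem impl_cons {x : α} {xs : List α} {y : β} {d : δ} {ds : List δ}
    (w : 0 < (d :: ds).length) (w' : 0 < ds.length) :
    Levenshtein.impl (C := C) (x :: xs) y ⟨d :: ds, w⟩ =
      ⟨min (C.delete x + (Levenshtein.impl (C := C) xs y ⟨ds, w'⟩).1[0]'
          (Levenshtein.impl (C := C) xs y ⟨ds, w'⟩).2)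
        (min (C.insert y + d) (C.substitute x y + ds[0])) ::
          (Levenshtein.impl (C := C) xs y ⟨ds, w'⟩).1, by simp⟩ :=
  match ds, w' with | _ :: _, _ => rfl

theorem impl_length (xs : List α) (y : β) (d : {r : List δ // 0 < r.length})
    (w : d.1.length = xs.length + 1) :
    (Levenshtein.impl (C := C) xs y d).1.length = xs.length + 1 := by
  induction xs generalizing d with
  | nil => rfl
  | cons x xs ih =>
    match d, w with
    | ⟨d₁ :: d₂ :: ds, _⟩, w =>
      rw [impl_cons C _ (by simp)]
      simp only [List.length_cons]
      congr 1
      exact ih ⟨d₂ :: ds, (by simp)⟩ (by simpa using w)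

theorem suffix_length (xs : List α) (ys : List β) :
    (Levenshtein.suffixLevenshtein C xs ys).1.length = xs.length + 1 := by
  induction ys with
  | nil =>
    induction xs with
    | nil => rfl
    | cons _ xs ih =>
      simp only [Levenshtein.suffixLevenshtein, List.foldr_nil] at ih ⊢
      simp only [List.foldr_cons, List.length_cons]
      rw [← ih]
  | cons y ys ih =>
    exact impl_length C xs y _ ih

theorem suffix_cons₁ (x : α) (xs : List α) (ys : List β) :
    Levenshtein.suffixLevenshtein C (x :: xs) ys =
      ⟨levenshtein C (x :: xs) ys :: (Levenshtein.suffixLevenshtein C xs ys).1, by simp⟩ := by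
  induction ys with
  | nil => rfl
  | cons y ys ih =>
    have e : Levenshtein.suffixLevenshtein C (x :: xs) (y :: ys) =
        Levenshtein.impl (C := C) (x :: xs) y (Levenshtein.suffixLevenshtein C (x :: xs) ys) := rfl
    have hl : 0 < (Levenshtein.suffixLevenshtein C xs ys).1.length := by
      rw [suffix_length]; omega
    have e3 : Levenshtein.suffixLevenshtein C xs (y :: ys) =
        Levenshtein.impl (C := C) xs y ⟨(Levenshtein.suffixLevenshtein C xs ys).1, hl⟩ := rfl
    have e2 : levenshtein C (x :: xs) (y :: ys) =
        (Levenshtein.suffixLevenshtein C (x :: xs) (y :: ys)).1[0]'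
          (Levenshtein.suffixLevenshtein C (x :: xs) (y :: ys)).2 := rfl
    apply Subtype.ext
    rw [e2]
    simp only [e, ih, impl_cons C _ hl, e3]
    rfl

end UkkonenLevAux

theorem levenshtein_nil_nil {α β δ : Type*} [AddZeroClass δ] [Min δ]
    (C : Levenshtein.Cost α β δ) : levenshtein C [] [] = 0 := rfl

theorem levenshtein_cons_nil {α β δ : Type*} [AddZeroClass δ] [Min δ]
    (C : Levenshtein.Cost α β δ) (x : α) (xs : List α) :
    levenshtein C (x :: xs) [] = C.delete x + levenshtein C xs [] := rfl

theorem levenshtein_nil_cons {α β δ : Type*} [AddZeroClass δ] [Min δ]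
    (C : Levenshtein.Cost α β δ) (y : β) (ys : List β) :
    levenshtein C [] (y :: ys) = C.insert y + levenshtein C [] ys := by
  have hl := UkkonenLevAux.suffix_length C ([] : List α) ys
  have e1 : levenshtein C [] (y :: ys) =
      (Levenshtein.impl (C := C) [] y (Levenshtein.suffixLevenshtein C [] ys)).1[0]'
        (Levenshtein.impl (C := C) [] y (Levenshtein.suffixLevenshtein C [] ys)).2 := rfl
  have e2 : levenshtein C [] ys = (Levenshtein.suffixLevenshtein C ([] : List α) ys).1[0]'
      (Levenshtein.suffixLevenshtein C ([] : List α) ys).2 := rfl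
  rw [e1, e2]
  generalize Levenshtein.suffixLevenshtein C ([] : List α) ys = s at hl ⊢
  obtain ⟨r, w⟩ := s
  simp only [List.length_nil, Nat.zero_add] at hl
  match r, hl with
  | [a], _ => rfl

theorem levenshtein_cons_cons {α β δ : Type*} [AddZeroClass δ] [Min δ]
    (C : Levenshtein.Cost α β δ) (x : α) (xs : List α) (y : β) (ys : List β) :
    levenshtein C (x :: xs) (y :: ys) =
      min (C.delete x + levenshtein C xs (y :: ys))
        (min (C.insert y + levenshtein C (x :: xs) ys)
          (C.substitute x y + levenshtein C xs ys)) := by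
  have hl : 0 < (Levenshtein.suffixLevenshtein C xs ys).1.length := by
    rw [UkkonenLevAux.suffix_length]; omega
  have e : Levenshtein.suffixLevenshtein C (x :: xs) (y :: ys) =
      Levenshtein.impl (C := C) (x :: xs) y (Levenshtein.suffixLevenshtein C (x :: xs) ys) := rfl
  have e0 : levenshtein C (x :: xs) (y :: ys) =
      (Levenshtein.suffixLevenshtein C (x :: xs) (y :: ys)).1[0]'
        (Levenshtein.suffixLevenshtein C (x :: xs) (y :: ys)).2 := rfl
  have e3 : Levenshtein.suffixLevenshtein C xs (y :: ys) =
      Levenshtein.impl (C := C) xs y ⟨(Levenshtein.suffixLevenshtein C xs ys).1, hl⟩ := rfl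
  have e4 : levenshtein C xs (y :: ys) =
      (Levenshtein.suffixLevenshtein C xs (y :: ys)).1[0]'
        (Levenshtein.suffixLevenshtein C xs (y :: ys)).2 := rfl
  have e5 : levenshtein C xs ys =
      (Levenshtein.suffixLevenshtein C xs ys).1[0]'
        (Levenshtein.suffixLevenshtein C xs ys).2 := rfl
  rw [e0, e, UkkonenLevAux.suffix_cons₁ C x xs ys]
  simp only [UkkonenLevAux.impl_cons C _ hl, e4, e3, e5]
  rfl

@[simp]
theorem Levenshtein.defaultCost_delete {α : Type*} [DecidableEq α] (a : α) :
    (Levenshtein.defaultCost (α := α)).delete a = 1 := rfl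

@[simp]
theorem Levenshtein.defaultCost_insert {α : Type*} [DecidableEq α] (a : α) :
    (Levenshtein.defaultCost (α := α)).insert a = 1 := rfl

@[simp]
theorem Levenshtein.defaultCost_substitute {α : Type*} [DecidableEq α] (a b : α) :
    (Levenshtein.defaultCost (α := α)).substitute a b = if a = b then 0 else 1 := rfl

section UkkonenAux
variable {α : Type*} [DecidableEq α]

local notation "lev" => levenshtein (Levenshtein.defaultCost (α := α))

private lemma lev_nil_right (u : List α) : lev u [] = u.length := by
  induction u with
  | nil => simp [levenshtein_nil_nil]
  | cons x xs ih => simp [levenshtein_cons_nil, ih]; omega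

private lemma lev_nil_left (v : List α) : lev [] v = v.length := by
  induction v with
  | nil => simp [levenshtein_nil_nil]
  | cons y ys ih => simp [levenshtein_nil_cons, ih]; omega

private lemma lev_snoc_snoc_eq_le (u : List α) (c : α) :
    ∀ v : List α, lev (u ++ [c]) (v ++ [c]) ≤ lev u v := by
  induction u with
  | nil =>
    intro v
    induction v with
    | nil => simp [levenshtein_cons_cons, levenshtein_nil_nil, lev_nil_left, lev_nil_right]
    | cons y ys ihv =>
      have h := ihv
      simp only [List.nil_append, List.cons_append, levenshtein_cons_cons,
        lev_nil_left, Levenshtein.defaultCost_delete, Levenshtein.defaultCost_insert,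
        Levenshtein.defaultCost_substitute, List.length_cons, List.length_append,
        List.length_nil, List.length_singleton] at *
      omega
  | cons x xs ihu =>
    intro v
    induction v with
    | nil =>
      have h := ihu []
      simp only [List.nil_append, List.cons_append, levenshtein_cons_cons,
        lev_nil_right, Levenshtein.defaultCost_delete, Levenshtein.defaultCost_insert,
        Levenshtein.defaultCost_substitute, List.length_cons, List.length_append,
        List.length_nil, List.length_singleton] at *
      omega
    | cons y ys ihv =>
      have h1 := ihu (y :: ys)
      have h2 := ihu ys
      have h3 := ihv
      simp only [List.cons_append, levenshtein_cons_cons, Levenshtein.defaultCost_delete,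
        Levenshtein.defaultCost_insert,
        Levenshtein.defaultCost_substitute, List.length_cons, List.length_append,
        List.length_nil, List.length_singleton] at *
      omega

private lemma lev_snoc_snoc_le (u : List α) (c d : α) :
    ∀ v : List α, lev (u ++ [c]) (v ++ [d]) ≤ lev u v + 1 := by
  induction u with
  | nil =>
    intro v
    induction v with
    | nil =>
      simp only [List.nil_append, levenshtein_cons_cons, levenshtein_nil_nil, lev_nil_left,
        lev_nil_right, Levenshtein.defaultCost_delete, Levenshtein.defaultCost_insert,
        Levenshtein.defaultCost_substitute, List.length_cons, List.length_append,
        List.length_nil, List.length_singleton]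
      split <;> omega
    | cons y ys ihv =>
      have h := ihv
      simp only [List.nil_append, List.cons_append, levenshtein_cons_cons,
        lev_nil_left, Levenshtein.defaultCost_delete, Levenshtein.defaultCost_insert,
        Levenshtein.defaultCost_substitute, List.length_cons, List.length_append,
        List.length_nil, List.length_singleton] at *
      omega
  | cons x xs ihu =>
    intro v
    induction v with
    | nil =>
      have h := ihu []
      simp only [List.nil_append, List.cons_append, levenshtein_cons_cons,
        lev_nil_right, Levenshtein.defaultCost_delete, Levenshtein.defaultCost_insert,
        Levenshtein.defaultCost_substitute, List.length_cons, List.length_append,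
        List.length_nil, List.length_singleton] at *
      omega
    | cons y ys ihv =>
      have h1 := ihu (y :: ys)
      have h2 := ihu ys
      have h3 := ihv
      simp only [List.cons_append, levenshtein_cons_cons, Levenshtein.defaultCost_delete,
        Levenshtein.defaultCost_insert,
        Levenshtein.defaultCost_substitute, List.length_cons, List.length_append,
        List.length_nil, List.length_singleton] at *
      omega

private lemma lev_snoc_left_le (u : List α) (c : α) :
    ∀ v : List α, lev (u ++ [c]) v ≤ lev u v + 1 := by
  induction u with
  | nil =>
    intro v
    induction v with
    | nil =>
      simp [levenshtein_cons_nil, levenshtein_nil_nil]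
    | cons y ys ihv =>
      have h := ihv
      simp only [List.nil_append, List.cons_append, levenshtein_cons_cons,
        levenshtein_nil_cons, lev_nil_left, Levenshtein.defaultCost_delete,
        Levenshtein.defaultCost_insert,
        Levenshtein.defaultCost_substitute, List.length_cons, List.length_append,
        List.length_nil, List.length_singleton] at *
      omega
  | cons x xs ihu =>
    intro v
    induction v with
    | nil =>
      have h := ihu []
      simp only [List.nil_append, List.cons_append, lev_nil_right, List.length_cons,
        List.length_append, List.length_nil, List.length_singleton] at *
      omega
    | cons y ys ihv =>
      have h1 := ihu (y :: ys)
      have h2 := ihu ys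
      have h3 := ihv
      simp only [List.cons_append, levenshtein_cons_cons, Levenshtein.defaultCost_delete,
        Levenshtein.defaultCost_insert,
        Levenshtein.defaultCost_substitute, List.length_cons, List.length_append,
        List.length_nil, List.length_singleton] at *
      omega

private lemma lev_snoc_right_le (u : List α) (c : α) :
    ∀ v : List α, lev u (v ++ [c]) ≤ lev u v + 1 := by
  induction u with
  | nil =>
    intro v
    simp only [lev_nil_left, List.length_append, List.length_singleton]
    omega
  | cons x xs ihu =>
    intro v
    induction v with
    | nil =>
      have h := ihu []
      simp only [List.nil_append, List.cons_append, levenshtein_cons_cons,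
        levenshtein_cons_nil, lev_nil_right, Levenshtein.defaultCost_delete,
        Levenshtein.defaultCost_insert,
        Levenshtein.defaultCost_substitute, List.length_cons, List.length_append,
        List.length_nil, List.length_singleton] at *
      omega
    | cons y ys ihv =>
      have h1 := ihu (y :: ys)
      have h2 := ihu ys
      have h3 := ihv
      simp only [List.cons_append, levenshtein_cons_cons, Levenshtein.defaultCost_delete,
        Levenshtein.defaultCost_insert,
        Levenshtein.defaultCost_substitute, List.length_cons, List.length_append,
        List.length_nil, List.length_singleton] at *
      omega

/-- Edit scripts that build both words from the right end. -/
private inductive SScript : ℕ → List α → List α → Prop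
  | base : SScript 0 [] []
  | mtch {n : ℕ} {u v : List α} (c : α) : SScript n u v → SScript n (u ++ [c]) (v ++ [c])
  | delete {n : ℕ} {u v : List α} (c : α) : SScript n u v → SScript (n + 1) (u ++ [c]) v
  | subst {n : ℕ} {u v : List α} (c d : α) : SScript n u v → SScript (n + 1) (u ++ [c]) (v ++ [d])
  | insert {n : ℕ} {u v : List α} (c : α) : SScript n u v → SScript (n + 1) u (v ++ [c])

private lemma lev_le_of_sscript {n : ℕ} {u v : List α} (h : SScript n u v) : lev u v ≤ n := by
  induction h with
  | base => simp [levenshtein_nil_nil]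
  | mtch c _ ih => exact le_trans (lev_snoc_snoc_eq_le _ _ _) ih
  | delete c _ ih => exact le_trans (lev_snoc_left_le _ _ _) (by omega)
  | subst c d _ ih => exact le_trans (lev_snoc_snoc_le _ _ _ _) (by omega)
  | insert c _ ih => exact le_trans (lev_snoc_right_le _ _ _) (by omega)

private lemma SScript.consMtch {n : ℕ} {u v : List α} (c : α) (h : SScript n u v) :
    SScript n (c :: u) (c :: v) := by
  induction h with
  | base => exact SScript.mtch c SScript.base
  | mtch d _ ih => exact SScript.mtch d ih
  | delete d _ ih => exact SScript.delete d ih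
  | subst d e _ ih => exact SScript.subst d e ih
  | insert d _ ih => exact SScript.insert d ih

private lemma SScript.consDel {n : ℕ} {u v : List α} (c : α) (h : SScript n u v) :
    SScript (n + 1) (c :: u) v := by
  induction h with
  | base => exact SScript.delete c SScript.base
  | mtch d _ ih => exact SScript.mtch d ih
  | delete d _ ih => exact SScript.delete d ih
  | subst d e _ ih => exact SScript.subst d e ih
  | insert d _ ih => exact SScript.insert d ih

private lemma SScript.consIns {n : ℕ} {u v : List α} (c : α) (h : SScript n u v) :
    SScript (n + 1) u (c :: v) := by
  induction h with
  | base => exact SScript.insert c SScript.base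
  | mtch d _ ih => exact SScript.mtch d ih
  | delete d _ ih => exact SScript.delete d ih
  | subst d e _ ih => exact SScript.subst d e ih
  | insert d _ ih => exact SScript.insert d ih

private lemma SScript.consSub {n : ℕ} {u v : List α} (c d : α) (h : SScript n u v) :
    SScript (n + 1) (c :: u) (d :: v) := by
  induction h with
  | base => exact SScript.subst c d SScript.base
  | mtch e _ ih => exact SScript.mtch e ih
  | delete e _ ih => exact SScript.delete e ih
  | subst e f _ ih => exact SScript.subst e f ih
  | insert e _ ih => exact SScript.insert e ih

private lemma sscript_lev (u : List α) : ∀ v : List α, SScript (lev u v) u v := by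
  induction u with
  | nil =>
    intro v
    induction v with
    | nil => rw [levenshtein_nil_nil]; exact SScript.base
    | cons y ys ihv =>
      rw [levenshtein_nil_cons, Levenshtein.defaultCost_insert, Nat.add_comm]
      exact SScript.consIns y ihv
  | cons x xs ihu =>
    intro v
    induction v with
    | nil =>
      rw [levenshtein_cons_nil, Levenshtein.defaultCost_delete, Nat.add_comm]
      exact SScript.consDel x (ihu [])
    | cons y ys ihv =>
      rw [levenshtein_cons_cons, Levenshtein.defaultCost_delete,
        Levenshtein.defaultCost_insert, Levenshtein.defaultCost_substitute]
      rcases min_choice (1 + lev xs (y :: ys))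
          (min (1 + lev (x :: xs) ys) ((if x = y then 0 else 1) + lev xs ys)) with h | h
      · rw [h, Nat.add_comm]
        exact SScript.consDel x (ihu (y :: ys))
      · rw [h]
        rcases min_choice (1 + lev (x :: xs) ys) ((if x = y then 0 else 1) + lev xs ys)
            with h' | h'
        · rw [h', Nat.add_comm]
          exact SScript.consIns y ihv
        · rw [h']
          by_cases hxy : x = y
          · subst hxy
            simp only [if_true, Nat.zero_add]
            exact SScript.consMtch x (ihu ys)
          · rw [if_neg hxy, Nat.add_comm]
            exact SScript.consSub x y (ihu ys)

private lemma reach_to_sscript {ψ : List α} {i j : ℕ} {u : List α}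
    (h : UkkonenReach ψ i j u) : j ≤ ψ.length ∧ SScript i u (ψ.take j) := by
  induction h with
  | base => exact ⟨Nat.zero_le _, SScript.base⟩
  | @horiz i j u c _ hget ih =>
    have hj : j < ψ.length := by
      exact (List.getElem?_eq_some_iff.mp hget).1
    refine ⟨hj, ?_⟩
    have ht : ψ.take (j + 1) = ψ.take j ++ [c] := by
      rw [List.take_succ] at *
      rw [hget]
      rfl
    rw [ht]
    exact SScript.mtch c ih.2
  | @insert i j u c _ ih => exact ⟨ih.1, SScript.delete c ih.2⟩
  | @subst i j u c _ hj ih =>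
    refine ⟨hj, ?_⟩
    have ht : ψ.take (j + 1) = ψ.take j ++ [ψ[j]] := by
      rw [List.take_succ, List.getElem?_eq_getElem hj]
      rfl
    rw [ht]
    exact SScript.subst c _ ih.2
  | @del i j u _ hj ih =>
    refine ⟨hj, ?_⟩
    have ht : ψ.take (j + 1) = ψ.take j ++ [ψ[j]] := by
      rw [List.take_succ, List.getElem?_eq_getElem hj]
      rfl
    rw [ht]
    exact SScript.insert _ ih.2

private lemma sscript_to_reach {ψ : List α} {n : ℕ} {u v : List α}
    (h : SScript n u v) (hpre : v <+: ψ) : UkkonenReach ψ n v.length u := by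
  induction h with
  | base => exact UkkonenReach.base
  | @mtch n u v c _ ih =>
    have hv : v <+: ψ := ((v.prefix_append [c]).trans hpre)
    have hget : ψ[v.length]? = some c := by
      obtain ⟨t, ht⟩ := hpre
      rw [← ht, List.getElem?_append_left (by simp)]
      simp
    have := UkkonenReach.horiz (ih hv) hget
    simpa using this
  | @delete n u v c _ ih =>
    exact UkkonenReach.insert c (ih hpre)
  | @subst n u v c d _ ih =>
    have hv : v <+: ψ := ((v.prefix_append [d]).trans hpre)
    have hlen : v.length < ψ.length := by
      have := hpre.length_le
      simp at this
      omega
    have := UkkonenReach.subst c (ih hv) hlen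
    simpa using this
  | @insert n u v c _ ih =>
    have hv : v <+: ψ := ((v.prefix_append [c]).trans hpre)
    have hlen : v.length < ψ.length := by
      have := hpre.length_le
      simp at this
      omega
    have := UkkonenReach.del (ih hv) hlen
    simpa using this

end UkkonenAux


/-- **Ukkonen NFA edit-distance characterization.** The Levenshtein distance (unit costs)
between the input `φ` and the pattern `ψ` is the least row index `i` such that the accept
state `q_{i,m}` (with `m = ψ.length`) is reachable on input `φ`. -/
theorem ukkonen_edit_distance {α : Type*} [DecidableEq α] (ψ φ : List α) :
    IsLeast {i : ℕ | UkkonenReach ψ i ψ.length φ}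
      (levenshtein Levenshtein.defaultCost φ ψ) := by
  constructor
  · have h := sscript_to_reach (sscript_lev φ ψ) (List.prefix_refl ψ)
    exact h
  · intro i hi
    have h := (reach_to_sscript hi).2
    rw [List.take_length] at h
    exact lev_le_of_sscript h
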